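/- Loop-invariant preservation under free driving, opposite direction (inductive step of Theorem 2, case safeDist_o(v1, v2) ≤ x2 − x1): Suppose v1 ≥ 0, v2 ≤ 0, x1 ≤ x2, safeDist_o(v1, v2) ≤ x2 − x1, −a_maxBrake ≤ a1 ≤ a_maxAccel, −a_maxAccel ≤ a2 ≤ a_maxBrake, 0 ≤ t ≤ ρ, and v1 + a1·s ≥ 0 and v2 + a2·s ≤ 0 for all s ∈ [0, t]. Let (x̃1, ṽ1, x̃2, ṽ2) be the kinematic update of (x1, v1, x2, v2) over duration t with accelerations a1, a2. Then x̃1 ≤ x̃2 and x̃1 + ṽ1²/(2·a_minBrake) ≤ x̃2 − ṽ2²/(2·a_minBrake). -/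
import Mathlib
set_option maxHeartbeats 1000000


/-- RSS opposite-direction safe distance. -/
noncomputable def safeDistO (aminBrake amaxAccel ρ v1 v2 : ℝ) : ℝ :=
  ((v1 + (v1 + ρ * amaxAccel)) / 2) * ρ + (v1 + ρ * amaxAccel)^2 / (2 * aminBrake)
  + ((|v2| + (|v2| + ρ * amaxAccel)) / 2) * ρ + (|v2| + ρ * amaxAccel)^2 / (2 * aminBrake)

/-- Loop-invariant preservation under free driving, opposite direction. -/
theorem loop_invariant_free_driving_opposite
    (aminBrake amaxBrake amaxAccel ρ : ℝ)
    (hmin : 0 < aminBrake) (hminmax : aminBrake < amaxBrake)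
    (hacc : 0 < amaxAccel) (hρ : 0 < ρ)
    (x1 x2 v1 v2 a1 a2 t : ℝ)
    (hv1 : v1 ≥ 0) (hv2 : v2 ≤ 0) (hx : x1 ≤ x2)
    (hdist : safeDistO aminBrake amaxAccel ρ v1 v2 ≤ x2 - x1)
    (ha1l : -amaxBrake ≤ a1) (ha1u : a1 ≤ amaxAccel)
    (ha2l : -amaxAccel ≤ a2) (ha2u : a2 ≤ amaxBrake)
    (ht0 : 0 ≤ t) (htρ : t ≤ ρ)
    (hvsign : ∀ s : ℝ, 0 ≤ s → s ≤ t → v1 + a1 * s ≥ 0 ∧ v2 + a2 * s ≤ 0) :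
    x1 + v1 * t + (1/2) * a1 * t^2 ≤ x2 + v2 * t + (1/2) * a2 * t^2 ∧
    (x1 + v1 * t + (1/2) * a1 * t^2) + (v1 + a1 * t)^2 / (2 * aminBrake)
      ≤ (x2 + v2 * t + (1/2) * a2 * t^2) - (v2 + a2 * t)^2 / (2 * aminBrake) := by
  obtain ⟨hw1, hw2⟩ := hvsign t ht0 le_rfl
  have habs : |v2| = -v2 := abs_of_nonpos hv2
  rw [safeDistO, habs] at hdist
  -- final speed bounds
  have hb1 : v1 + a1 * t ≤ v1 + ρ * amaxAccel := by nlinarith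
  have hb2 : -(v2 + a2 * t) ≤ -v2 + ρ * amaxAccel := by nlinarith
  have hsq1 : (v1 + a1 * t)^2 ≤ (v1 + ρ * amaxAccel)^2 := by nlinarith
  have hsq2 : (v2 + a2 * t)^2 ≤ (-v2 + ρ * amaxAccel)^2 := by nlinarith
  -- displacement bounds
  have hd1 : v1 * t + (1/2) * a1 * t^2 ≤ ((v1 + (v1 + ρ * amaxAccel)) / 2) * ρ := by
    nlinarith [mul_nonneg hv1 (sub_nonneg.2 htρ), sq_nonneg t,
      mul_nonneg (sub_nonneg.2 ha1u) (sq_nonneg t),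
      mul_nonneg hacc.le (mul_nonneg (sub_nonneg.2 htρ) (by linarith : (0:ℝ) ≤ ρ + t))]
  have hd2 : -(v2 * t + (1/2) * a2 * t^2) ≤ ((-v2 + (-v2 + ρ * amaxAccel)) / 2) * ρ := by
    nlinarith [mul_nonneg (neg_nonneg.2 hv2) (sub_nonneg.2 htρ),
      mul_nonneg (by linarith : (0:ℝ) ≤ amaxAccel + a2) (sq_nonneg t),
      mul_nonneg hacc.le (mul_nonneg (sub_nonneg.2 htρ) (by linarith : (0:ℝ) ≤ ρ + t))]
  have h2b : (0:ℝ) < 2 * aminBrake := by linarith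
  have hq1 : (v1 + a1 * t)^2 / (2 * aminBrake) ≤ (v1 + ρ * amaxAccel)^2 / (2 * aminBrake) :=
    by gcongr
  have hq2 : (v2 + a2 * t)^2 / (2 * aminBrake) ≤ (-v2 + ρ * amaxAccel)^2 / (2 * aminBrake) :=
    by gcongr
  have hq1' : 0 ≤ (v1 + a1 * t)^2 / (2 * aminBrake) := div_nonneg (sq_nonneg _) h2b.le
  have hq2' : 0 ≤ (v2 + a2 * t)^2 / (2 * aminBrake) := div_nonneg (sq_nonneg _) h2b.le
  constructor <;> linarith
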